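/- The set of points of low point-complexity has small dimension: for a metric space X with computable interpretation I, the set W^d = {x ∈ X : liminf_{i→∞} S^I(x, 2^{-i})/i ≤ d} has Hausdorff dimension ≤ d. Consequently, for every d, for all x outside a set F of d-dimensional Hausdorff measure zero, for every δ > 0 and all sufficiently small ε: S^I(x,ε) ≥ −(d − δ) log₂ ε. -/

import Mathlib

open Metric Set Filter ENNReal MeasureTheory

/-- `I : Σ → X` is a computable interpretation. -/
def IsCompInterp {X : Type*} [MetricSpace X] (I : List Bool → X) : Prop :=
  DenseRange I ∧
    ∃ D : List Bool → List Bool → ℕ → ℚ,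
      Computable (fun q : (List Bool × List Bool) × ℕ => D q.1.1 q.1.2 q.2) ∧
      ∀ (s₁ s₂ : List Bool) (n : ℕ),
        |dist (I s₁) (I s₂) - (D s₁ s₂ n : ℝ)| ≤ (2 : ℝ)⁻¹ ^ n

/-- `S^I(x,ε) = min{|p| : d(I(U(p)), x) < ε}`. -/
noncomputable def Sinfo (U : List Bool →. List Bool) {Y : Type*} [MetricSpace Y]
    (I : List Bool → Y) (x : Y) (ε : ℝ) : ℕ∞ :=
  sInf {n : ℕ∞ | ∃ p : List Bool, (p.length : ℕ∞) = n ∧ ∃ s ∈ U p, dist (I s) x < ε}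

/-- The set of points of complexity exponent at most `d`:
`W^d = {x : liminf_i S^I(x, 2^{-i})/i ≤ d}`. -/
noncomputable def Wset (U : List Bool →. List Bool) {Y : Type*} [MetricSpace Y]
    (I : List Bool → Y) (d : ℝ) : Set Y :=
  {x | liminf (fun i : ℕ => (Sinfo U I x ((2 : ℝ)⁻¹ ^ i) : ℝ≥0∞) / (i : ℝ≥0∞)) atTop
    ≤ ENNReal.ofReal d}

namespace Stmt18Aux

/-- Binary value of a bit string, with a leading 1 to make it injective. -/
def bval : List Bool → ℕ
  | [] => 1
  | b :: t => 2 * bval t + (if b then 1 else 0)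

lemma one_le_bval (p : List Bool) : 1 ≤ bval p := by
  induction p with
  | nil => simp [bval]
  | cons b t ih => cases b <;> simp [bval] <;> omega

lemma bval_lt (p : List Bool) : bval p < 2 ^ (p.length + 1) := by
  induction p with
  | nil => simp [bval]
  | cons b t ih =>
    have h : 2 ^ (t.length + 1 + 1) = 2 * 2 ^ (t.length + 1) := by ring
    cases b <;> simp [bval, List.length_cons] <;> omega

lemma bval_inj : ∀ p q : List Bool, bval p = bval q → p = q := by
  intro p
  induction p with
  | nil =>
    intro q h
    cases q with
    | nil => rfl
    | cons b t =>
      have h1 := one_le_bval t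
      exfalso; cases b <;> simp [bval] at h <;> omega
  | cons a as ih =>
    intro q h
    cases q with
    | nil =>
      have h1 := one_le_bval as
      exfalso; cases a <;> simp [bval] at h <;> omega
    | cons b bs =>
      have h1 := one_le_bval as
      have h2 := one_le_bval bs
      cases a <;> cases b
      · simp [bval] at h; rw [ih bs (by omega)]
      · simp [bval] at h; omega
      · simp [bval] at h; omega
      · simp [bval] at h; rw [ih bs (by omega)]

lemma tsum_len_le (L : ℕ) (c : ℝ≥0∞) :
    ∑' p : List Bool, (if p.length ≤ L then c else 0) ≤ 2 ^ (L + 1) * c := by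
  classical
  have hfin : {p : List Bool | p.length ≤ L}.Finite := by
    apply Set.Finite.of_finite_image (f := bval)
    · apply (Set.finite_Iio (2 ^ (L + 1))).subset
      rintro _ ⟨p, hp, rfl⟩
      exact lt_of_lt_of_le (bval_lt p)
        (Nat.pow_le_pow_right (by norm_num) (by simpa using Nat.add_le_add_right hp 1))
    · exact fun p _ q _ h => bval_inj p q h
  have hz : ∀ p : List Bool, p ∉ hfin.toFinset → (if p.length ≤ L then c else 0) = 0 :=
    fun p hp => if_neg (by simpa using hp)
  rw [tsum_eq_sum hz]
  have hcard : hfin.toFinset.card ≤ 2 ^ (L + 1) := by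
    have := Finset.card_le_card_of_injOn (s := hfin.toFinset) (f := bval)
      (t := Finset.range (2 ^ (L + 1)))
      (fun p hp => by
        simp only [Finset.coe_range, Set.mem_Iio]
        have hpL : p.length ≤ L := by simpa using hp
        exact lt_of_lt_of_le (bval_lt p)
          (Nat.pow_le_pow_right (by norm_num) (by omega)))
      (fun p _ q _ h => bval_inj p q h)
    simpa using this
  calc ∑ p ∈ hfin.toFinset, (if p.length ≤ L then c else 0)
      ≤ ∑ _p ∈ hfin.toFinset, c := Finset.sum_le_sum (fun p _ => by split <;> simp)
    _ = hfin.toFinset.card • c := Finset.sum_const c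
    _ ≤ (2 ^ (L + 1) : ℕ) • c := smul_le_smul_of_nonneg_right (by exact_mod_cast hcard) (zero_le)
    _ = 2 ^ (L + 1) * c := by rw [nsmul_eq_mul]; push_cast; ring_nf

lemma ediam_closedBall_le {Y : Type*} [MetricSpace Y] (y : Y) (r : ℝ) :
    EMetric.diam (Metric.closedBall y r) ≤ ENNReal.ofReal (2 * r) := by
  apply EMetric.diam_le
  intro a ha b hb
  rw [edist_dist]
  apply ENNReal.ofReal_le_ofReal
  have h1 : dist a y ≤ r := ha
  have h2 : dist b y ≤ r := hb
  calc dist a b ≤ dist a y + dist y b := dist_triangle a y b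
    _ ≤ r + r := add_le_add h1 (by rwa [dist_comm])
    _ = 2 * r := by ring

lemma Sinfo_anti {Y : Type*} [MetricSpace Y] (U : List Bool →. List Bool)
    (I : List Bool → Y) (x : Y) {ε₁ ε₂ : ℝ} (h : ε₁ ≤ ε₂) :
    Sinfo U I x ε₂ ≤ Sinfo U I x ε₁ :=
  sInf_le_sInf (fun n hn => by
    obtain ⟨p, hp, s, hs, hd⟩ := hn
    exact ⟨p, hp, s, hs, lt_of_lt_of_le hd h⟩)

lemma exists_prog {Y : Type*} [MetricSpace Y] {U : List Bool →. List Bool}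
    {I : List Bool → Y} {x : Y} {ε : ℝ} {c : ℝ≥0∞}
    (h : (Sinfo U I x ε : ℝ≥0∞) < c) :
    ∃ p : List Bool, ((p.length : ℝ≥0∞) < c) ∧ ∃ s ∈ U p, dist (I s) x < ε := by
  have hne : Sinfo U I x ε ≠ ⊤ := by
    intro htop
    rw [htop] at h
    simp at h
  obtain ⟨n, hn⟩ := WithTop.ne_top_iff_exists.1 hne
  have hlt : sInf {n : ℕ∞ | ∃ p : List Bool, (p.length : ℕ∞) = n ∧
      ∃ s ∈ U p, dist (I s) x < ε} < (n : ℕ∞) + 1 := by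
    rw [show sInf _ = Sinfo U I x ε from rfl, ← hn]
    exact (ENat.lt_add_one_iff (by simp)).2 le_rfl
  obtain ⟨m, hm, hmlt⟩ := sInf_lt_iff.1 hlt
  obtain ⟨p, hp, s, hs, hd⟩ := hm
  refine ⟨p, ?_, s, hs, hd⟩
  have hlen : (p.length : ℕ∞) ≤ (n : ℕ∞) := by
    rw [hp]
    exact Order.le_of_lt_add_one hmlt
  calc (p.length : ℝ≥0∞) = ((p.length : ℕ∞) : ℝ≥0∞) := by simp
    _ ≤ ((n : ℕ∞) : ℝ≥0∞) := by exact_mod_cast hlen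
    _ = (Sinfo U I x ε : ℝ≥0∞) := congrArg _ hn
    _ < c := h

lemma hofr (i : ℕ) :
    ENNReal.ofReal (2 * (2 : ℝ)⁻¹ ^ i) = (2 : ℝ≥0∞) ^ ((1 : ℝ) - i) := by
  have h2 : 2 * (2 : ℝ)⁻¹ ^ i = (2 : ℝ) ^ ((1 : ℝ) - i) := by
    rw [Real.rpow_sub (by norm_num), Real.rpow_one, Real.rpow_natCast, inv_pow,
      div_eq_mul_inv]
  rw [h2, ← ENNReal.ofReal_rpow_of_pos (by norm_num)]
  norm_num

open Classical in
/-- The covering family: for a program `p` of length at most `⌊d' i⌋` on which `U` halts,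
a closed ball of radius `2⁻¹ ^ i` around `I (U p)`. -/
noncomputable def Afam {X : Type*} [MetricSpace X] (I : List Bool → X)
    (U : List Bool →. List Bool) (d' : ℝ) (k : ℕ) (ip : ℕ × List Bool) : Set X :=
  if h : k ≤ ip.1 ∧ ip.2.length ≤ Nat.floor (d' * ip.1) ∧ (U ip.2).Dom
  then Metric.closedBall (I ((U ip.2).get h.2.2)) ((2 : ℝ)⁻¹ ^ ip.1) else ∅

set_option maxHeartbeats 2000000 in
lemma hmeas_zero {X : Type*} [MetricSpace X] [MeasurableSpace X] [BorelSpace X]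
    (I : List Bool → X) (U : List Bool →. List Bool)
    {d e : ℝ} (hd : 0 ≤ d) (hde : d < e) : μH[e] (Wset U I d) = 0 := by
  classical
  set d' : ℝ := (d + e) / 2 with hd'def
  have hdd' : d < d' := by rw [hd'def]; linarith
  have hd'e : d' < e := by rw [hd'def]; linarith
  have hd'0 : 0 < d' := lt_of_le_of_lt hd hdd'
  have he0 : 0 < e := lt_of_le_of_lt hd hde
  set ρ : ℝ≥0∞ := (2 : ℝ≥0∞) ^ (d' - e) with hρdef
  have hρ1 : ρ < 1 := ENNReal.rpow_lt_one_of_one_lt_of_neg (by norm_num) (by linarith)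
  set C : ℝ≥0∞ := (2 : ℝ≥0∞) ^ (1 + e) with hCdef
  have hCtop : C ≠ ⊤ := by
    rw [hCdef]; exact ENNReal.rpow_ne_top_of_nonneg (by linarith) (by norm_num)
  have hinvtop : (1 - ρ)⁻¹ ≠ ⊤ := by
    rw [Ne, ENNReal.inv_eq_top, tsub_eq_zero_iff_le]
    exact not_le.2 hρ1
  have h_g : ∀ i : ℕ, (2 : ℝ≥0∞) ^ (Nat.floor (d' * i) + 1) *
      ((2 : ℝ≥0∞) ^ ((1 : ℝ) - i)) ^ (e : ℝ) ≤ C * ρ ^ i := by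
    intro i
    have hL : ((Nat.floor (d' * i) : ℝ)) ≤ d' * i := Nat.floor_le (by positivity)
    have lhs_eq : (2 : ℝ≥0∞) ^ (Nat.floor (d' * i) + 1) *
        ((2 : ℝ≥0∞) ^ ((1 : ℝ) - i)) ^ (e : ℝ)
        = (2 : ℝ≥0∞) ^ (((Nat.floor (d' * i) + 1 : ℕ) : ℝ) + ((1 : ℝ) - i) * e) := by
      rw [← ENNReal.rpow_natCast 2 (Nat.floor (d' * i) + 1), ← ENNReal.rpow_mul,
        ← ENNReal.rpow_add _ _ (by norm_num) (by norm_num)]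
    have rhs_eq : C * ρ ^ i = (2 : ℝ≥0∞) ^ ((1 + e) + (d' - e) * i) := by
      rw [hCdef, hρdef, ← ENNReal.rpow_natCast ((2 : ℝ≥0∞) ^ (d' - e)) i,
        ← ENNReal.rpow_mul, ← ENNReal.rpow_add _ _ (by norm_num) (by norm_num)]
    rw [lhs_eq, rhs_eq]
    apply ENNReal.rpow_le_rpow_of_exponent_le (by norm_num)
    push_cast
    nlinarith [hL]
  refine le_antisymm ?_ (zero_le)
  refine ENNReal.le_of_forall_pos_le_add fun ε hε _ => ?_
  rw [zero_add]
  rw [Measure.hausdorffMeasure_apply]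
  refine iSup₂_le fun r hr => ?_
  -- choose the cut-off k
  have hten1 : Tendsto (fun k : ℕ => ENNReal.ofReal (2 * (2 : ℝ)⁻¹ ^ k)) atTop (nhds 0) := by
    have h0 : Tendsto (fun k : ℕ => 2 * (2 : ℝ)⁻¹ ^ k) atTop (nhds (2 * 0)) :=
      (_root_.tendsto_pow_atTop_nhds_zero_of_lt_one (by norm_num) (by norm_num)).const_mul 2
    rw [mul_zero] at h0
    simpa using ENNReal.tendsto_ofReal h0
  have hten2 : Tendsto (fun k : ℕ => C * ρ ^ k * (1 - ρ)⁻¹) atTop (nhds 0) := by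
    have h0 : Tendsto (fun k : ℕ => ρ ^ k) atTop (nhds 0) :=
      ENNReal.tendsto_pow_atTop_nhds_zero_of_lt_one hρ1
    have h1 := ENNReal.Tendsto.const_mul (a := C) h0 (Or.inr hCtop)
    rw [mul_zero] at h1
    have h2 := ENNReal.Tendsto.mul_const (b := (1 - ρ)⁻¹) h1 (Or.inr hinvtop)
    rw [zero_mul] at h2
    exact h2
  obtain ⟨k, hk1, hk2⟩ :=
    ((hten1.eventually_lt_const hr).and
      (hten2.eventually_lt_const (ENNReal.coe_pos.2 hε))).exists
  haveI : Denumerable (List Bool) := Denumerable.ofEncodableOfInfinite _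
  let eqv : ℕ ≃ ℕ × List Bool := (Denumerable.eqv (ℕ × List Bool)).symm
  set t : ℕ → Set X := fun n => Afam I U d' k (eqv n) with htdef
  -- the cover property
  have hcov : Wset U I d ⊆ ⋃ n, t n := by
    intro x hx
    have hx0 : liminf (fun i : ℕ => (Sinfo U I x ((2 : ℝ)⁻¹ ^ i) : ℝ≥0∞) / (i : ℝ≥0∞)) atTop
        ≤ ENNReal.ofReal d := hx
    have hx' : liminf (fun i : ℕ => (Sinfo U I x ((2 : ℝ)⁻¹ ^ i) : ℝ≥0∞) / (i : ℝ≥0∞)) atTop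
        < ENNReal.ofReal d' :=
      lt_of_le_of_lt hx0 ((ENNReal.ofReal_lt_ofReal_iff hd'0).2 hdd')
    obtain ⟨i, hik, hi⟩ := (frequently_atTop.1 (frequently_lt_of_liminf_lt (h := hx'))) (max k 1)
    have hik1 : 1 ≤ i := le_trans (le_max_right _ _) hik
    have hikk : k ≤ i := le_trans (le_max_left _ _) hik
    have hi0 : (i : ℝ≥0∞) ≠ 0 := Nat.cast_ne_zero.2 (by omega)
    have hitop : (i : ℝ≥0∞) ≠ ⊤ := ENNReal.natCast_ne_top i
    rw [ENNReal.div_lt_iff (Or.inl hi0) (Or.inl hitop)] at hi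
    obtain ⟨p, hplen, s, hs, hdist⟩ := exists_prog hi
    have hdom : (U p).Dom := Part.dom_iff_mem.2 ⟨s, hs⟩
    have hplen' : p.length ≤ Nat.floor (d' * i) := by
      apply Nat.le_floor
      have h1 : ENNReal.ofReal (p.length : ℝ) < ENNReal.ofReal (d' * i) := by
        rw [ENNReal.ofReal_natCast, ENNReal.ofReal_mul hd'0.le, ENNReal.ofReal_natCast]
        exact hplen
      exact ((ENNReal.ofReal_lt_ofReal_iff_of_nonneg (Nat.cast_nonneg _)).1 h1).le
    have hcond : k ≤ (i, p).1 ∧ (i, p).2.length ≤ Nat.floor (d' * (i, p).1) ∧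
        (U (i, p).2).Dom := ⟨hikk, hplen', hdom⟩
    have hxA : x ∈ Afam I U d' k (i, p) := by
      rw [Afam, dif_pos hcond]
      rw [Metric.mem_closedBall, Part.get_eq_of_mem hs, dist_comm]
      exact hdist.le
    refine mem_iUnion.2 ⟨eqv.symm (i, p), ?_⟩
    rw [htdef]
    simpa using hxA
  -- the diameter bound
  have hAdiam : ∀ ip : ℕ × List Bool,
      EMetric.diam (Afam I U d' k ip) ≤ ENNReal.ofReal (2 * (2 : ℝ)⁻¹ ^ k) := by
    intro ip
    by_cases hc : k ≤ ip.1 ∧ ip.2.length ≤ Nat.floor (d' * ip.1) ∧ (U ip.2).Dom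
    · rw [Afam, dif_pos hc]
      refine le_trans (ediam_closedBall_le _ _) (ENNReal.ofReal_le_ofReal ?_)
      have hp : (2 : ℝ)⁻¹ ^ ip.1 ≤ (2 : ℝ)⁻¹ ^ k :=
        pow_le_pow_of_le_one (by norm_num) (by norm_num) hc.1
      linarith
    · rw [Afam, dif_neg hc, show EMetric.diam (∅ : Set X) = 0 from Metric.ediam_empty]
      exact zero_le
  have hdiam : ∀ n, EMetric.diam (t n) ≤ r := fun n => le_trans (hAdiam _) hk1.le
  refine le_trans (iInf_le_of_le t (iInf_le_of_le hcov (iInf_le _ hdiam))) ?_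
  -- bounding the sum
  have hF : ∀ ip : ℕ × List Bool,
      (⨆ _ : (Afam I U d' k ip).Nonempty, EMetric.diam (Afam I U d' k ip) ^ e) ≤
      (if k ≤ ip.1 ∧ ip.2.length ≤ Nat.floor (d' * ip.1)
        then ((2 : ℝ≥0∞) ^ ((1 : ℝ) - ip.1)) ^ (e : ℝ) else 0) := by
    intro ip
    refine iSup_le fun hne => ?_
    by_cases hc : k ≤ ip.1 ∧ ip.2.length ≤ Nat.floor (d' * ip.1) ∧ (U ip.2).Dom
    · rw [if_pos ⟨hc.1, hc.2.1⟩]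
      refine ENNReal.rpow_le_rpow ?_ he0.le
      rw [← hofr]
      rw [Afam, dif_pos hc]
      exact ediam_closedBall_le _ _
    · exfalso
      rw [Afam, dif_neg hc] at hne
      exact Set.not_nonempty_empty hne
  calc ∑' n, ⨆ _ : (t n).Nonempty, EMetric.diam (t n) ^ e
      = ∑' ip : ℕ × List Bool,
          ⨆ _ : (Afam I U d' k ip).Nonempty, EMetric.diam (Afam I U d' k ip) ^ e :=
        eqv.tsum_eq (fun ip => ⨆ _ : (Afam I U d' k ip).Nonempty,
          EMetric.diam (Afam I U d' k ip) ^ e)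
    _ ≤ ∑' ip : ℕ × List Bool, (if k ≤ ip.1 ∧ ip.2.length ≤ Nat.floor (d' * ip.1)
          then ((2 : ℝ≥0∞) ^ ((1 : ℝ) - ip.1)) ^ (e : ℝ) else 0) := ENNReal.tsum_le_tsum hF
    _ = ∑' i : ℕ, ∑' p : List Bool, (if k ≤ i ∧ p.length ≤ Nat.floor (d' * i)
          then ((2 : ℝ≥0∞) ^ ((1 : ℝ) - i)) ^ (e : ℝ) else 0) := ENNReal.tsum_prod'
    _ ≤ ∑' i : ℕ, (if k ≤ i then C * ρ ^ i else 0) := by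
        refine ENNReal.tsum_le_tsum fun i => ?_
        by_cases hki : k ≤ i
        · simp only [hki, true_and, if_true]
          refine le_trans (tsum_len_le (Nat.floor (d' * i))
            (((2 : ℝ≥0∞) ^ ((1 : ℝ) - i)) ^ (e : ℝ))) ?_
          exact h_g i
        · simp only [hki, false_and, if_false]
          simp
    _ ≤ (ε : ℝ≥0∞) := by
        set g : ℕ → ℝ≥0∞ := fun i => if k ≤ i then C * ρ ^ i else 0 with hgdef
        have hsplit := Summable.sum_add_tsum_nat_add' (f := g) (k := k) ENNReal.summable
        rw [← hsplit]
        have h1 : ∑ i ∈ Finset.range k, g i = 0 :=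
          Finset.sum_eq_zero fun i hi => if_neg (by simp at hi; omega)
        rw [h1, zero_add]
        show (∑' j : ℕ, (if k ≤ j + k then C * ρ ^ (j + k) else 0)) ≤ (ε : ℝ≥0∞)
        calc ∑' j : ℕ, (if k ≤ j + k then C * ρ ^ (j + k) else 0)
            = ∑' j : ℕ, C * ρ ^ k * ρ ^ j := by
              congr 1
              funext j
              rw [if_pos (by omega), pow_add]
              ring
          _ = C * ρ ^ k * (1 - ρ)⁻¹ := by rw [ENNReal.tsum_mul_left, ENNReal.tsum_geometric]
          _ ≤ (ε : ℝ≥0∞) := hk2.le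

end Stmt18Aux

/-- The set of points of low point-complexity has Hausdorff dimension `≤ d`, and
consequently outside a set of `d`-dimensional Hausdorff measure zero one has
`S^I(x,ε) ≥ −(d−δ) log₂ ε` for all small `ε`. -/
theorem stmt18 {X : Type*} [MetricSpace X] [MeasurableSpace X] [BorelSpace X]
    (I : List Bool → X) (hI : IsCompInterp I)
    (U : List Bool →. List Bool) (hU : Partrec U)
    (d : ℝ) (hd : 0 ≤ d) :
    dimH (Wset U I d) ≤ ENNReal.ofReal d ∧
      ∃ F : Set X, μH[d] F = 0 ∧
        ∀ x ∉ F, ∀ δ > (0 : ℝ), ∃ εbar > (0 : ℝ), ∀ ε : ℝ, 0 < ε → ε < εbar →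
          ENNReal.ofReal (-(d - δ) * Real.logb 2 ε) ≤ (Sinfo U I x ε : ℝ≥0∞) := by
  classical
  constructor
  · -- Hausdorff dimension bound
    apply dimH_le
    intro d' hd'
    by_contra hlt
    push_neg at hlt
    have hdlt : d < (d' : ℝ) := by
      rw [← ENNReal.ofReal_coe_nnreal] at hlt
      exact (ENNReal.ofReal_lt_ofReal_iff_of_nonneg hd).1 hlt
    have h0 := Stmt18Aux.hmeas_zero I U hd hdlt
    rw [h0] at hd'
    simp at hd'
  · refine ⟨⋃ q : ℚ, if (0 : ℝ) < q ∧ (q : ℝ) < d then Wset U I q else ∅, ?_, ?_⟩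
    · refine measure_iUnion_null fun q => ?_
      split_ifs with hq
      · exact Stmt18Aux.hmeas_zero I U hq.1.le hq.2
      · exact measure_empty
    · intro x hx δ hδ
      by_cases hδd : d ≤ δ
      · -- trivial case : the bound is nonpositive
        refine ⟨1, one_pos, fun ε hε hε1 => ?_⟩
        have hlog : Real.logb 2 ε ≤ 0 := Real.logb_nonpos (by norm_num) hε.le hε1.le
        have hnp : -(d - δ) * Real.logb 2 ε ≤ 0 :=
          mul_nonpos_of_nonneg_of_nonpos (by linarith) hlog
        rw [ENNReal.ofReal_of_nonpos hnp]
        exact zero_le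
      · push_neg at hδd
        obtain ⟨q, hq1, hq2⟩ := exists_rat_btwn (show max 0 (d - δ) < d from
          max_lt (by linarith) (by linarith))
        have hq0 : (0 : ℝ) < q := lt_of_le_of_lt (le_max_left _ _) hq1
        have hqd : d - δ < q := lt_of_le_of_lt (le_max_right _ _) hq1
        have hxW : x ∉ Wset U I q := fun hxw =>
          hx (mem_iUnion.2 ⟨q, by rw [if_pos ⟨hq0, hq2⟩]; exact hxw⟩)
        have hlim : ENNReal.ofReal q <
            liminf (fun i : ℕ => (Sinfo U I x ((2 : ℝ)⁻¹ ^ i) : ℝ≥0∞) / (i : ℝ≥0∞)) atTop :=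
          not_le.1 hxW
        obtain ⟨N, hN⟩ := eventually_atTop.1 (eventually_lt_of_lt_liminf hlim)
        set cq : ℝ := q - (d - δ) with hcq
        have hcq0 : 0 < cq := by rw [hcq]; linarith
        set M : ℕ := max N (max 1 (Nat.ceil ((d - δ) / cq))) with hM
        refine ⟨(2 : ℝ)⁻¹ ^ M, by positivity, fun ε hε hεM => ?_⟩
        set L : ℝ := -Real.logb 2 ε with hL
        have hM1 : 1 ≤ M := le_trans (le_max_left _ _) (le_max_right _ _)
        have hεlt1 : ε < 1 := lt_of_lt_of_le hεM (by
          calc (2 : ℝ)⁻¹ ^ M ≤ (2 : ℝ)⁻¹ ^ 1 :=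
                pow_le_pow_of_le_one (by norm_num) (by norm_num) hM1
            _ ≤ 1 := by norm_num)
        have hL0 : 0 < L := by
          rw [hL]
          have := Real.logb_neg (show (1 : ℝ) < 2 by norm_num) hε hεlt1
          linarith
        set i : ℕ := Nat.floor L with hi
        have hiL : (i : ℝ) ≤ L := by rw [hi]; exact Nat.floor_le hL0.le
        have hLi1 : L < i + 1 := by rw [hi]; exact Nat.lt_floor_add_one L
        have h2M : Real.logb 2 ((2 : ℝ)⁻¹ ^ M) = -(M : ℝ) := by
          rw [Real.logb_pow, Real.logb_inv, Real.logb_self_eq_one (by norm_num : (1:ℝ) < 2)]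
          ring
        have hML : (M : ℝ) < L := by
          have hmono := Real.logb_lt_logb (show (1 : ℝ) < 2 by norm_num) hε hεM
          rw [h2M] at hmono
          rw [hL]
          linarith
        have hMi : M ≤ i := by rw [hi]; exact Nat.le_floor hML.le
        have hNi : N ≤ i := le_trans (le_max_left _ _) hMi
        have hi1 : 1 ≤ i := le_trans (le_trans (le_max_left _ _) (le_max_right _ _)) hMi
        have hceil : d - δ ≤ cq * i := by
          have h1 : ((d - δ) / cq) ≤ (Nat.ceil ((d - δ) / cq) : ℝ) := Nat.le_ceil _
          have h2 : (Nat.ceil ((d - δ) / cq) : ℝ) ≤ (i : ℝ) := by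
            exact_mod_cast le_trans (le_trans (le_max_right _ _) (le_max_right _ _)) hMi
          have h3 : (d - δ) / cq ≤ (i : ℝ) := le_trans h1 h2
          calc d - δ = ((d - δ) / cq) * cq := by field_simp
            _ ≤ (i : ℝ) * cq := mul_le_mul_of_nonneg_right h3 hcq0.le
            _ = cq * i := mul_comm _ _
        have hεi : ε ≤ (2 : ℝ)⁻¹ ^ i := by
          have hlogb : Real.logb 2 ε ≤ -(i : ℝ) := by rw [hL] at hiL; linarith
          have h1 : ε = (2 : ℝ) ^ Real.logb 2 ε :=
            (Real.rpow_logb (by norm_num) (by norm_num) hε).symm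
          have h2 : (2 : ℝ) ^ Real.logb 2 ε ≤ (2 : ℝ) ^ (-(i : ℝ)) :=
            Real.rpow_le_rpow_of_exponent_le (by norm_num) hlogb
          have h3 : (2 : ℝ) ^ (-(i : ℝ)) = (2 : ℝ)⁻¹ ^ i := by
            rw [Real.rpow_neg (by norm_num), Real.rpow_natCast, inv_pow]
          rw [h1]
          rw [h3] at h2
          exact h2
        have hSmono : (Sinfo U I x ((2 : ℝ)⁻¹ ^ i) : ℝ≥0∞) ≤ (Sinfo U I x ε : ℝ≥0∞) :=
          ENat.toENNReal_le.2 (Stmt18Aux.Sinfo_anti U I x hεi)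
        have hqi := hN i hNi
        have hi0 : (i : ℝ≥0∞) ≠ 0 := Nat.cast_ne_zero.2 (by omega)
        have hitop : (i : ℝ≥0∞) ≠ ⊤ := ENNReal.natCast_ne_top i
        rw [ENNReal.lt_div_iff_mul_lt (Or.inl hi0) (Or.inl hitop)] at hqi
        have hkey : (d - δ) * L ≤ (q : ℝ) * i := by nlinarith
        calc ENNReal.ofReal (-(d - δ) * Real.logb 2 ε)
            = ENNReal.ofReal ((d - δ) * L) := by rw [hL]; congr 1; ring
          _ ≤ ENNReal.ofReal ((q : ℝ) * i) := ENNReal.ofReal_le_ofReal hkey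
          _ = ENNReal.ofReal q * (i : ℝ≥0∞) := by
              rw [ENNReal.ofReal_mul hq0.le, ENNReal.ofReal_natCast]
          _ ≤ (Sinfo U I x ((2 : ℝ)⁻¹ ^ i) : ℝ≥0∞) := hqi.le
          _ ≤ (Sinfo U I x ε : ℝ≥0∞) := hSmono
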